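/- Let G be a finite abstract simplicial complex and L its connection matrix, L(x,y) = 1 if x ∩ y ≠ ∅ else 0. Then L is invertible and its inverse g satisfies the Green star formula g(x,y) = ω(x) ω(y) χ(St(x) ∩ St(y)), where ω(x) = (-1)^dim(x), St(x) = {z ∈ G : x ⊆ z}, and χ(A) = Σ_{z∈A} (-1)^dim(z) for any set A of simplices. -/

import Mathlib

open Finset

lemma gsf_pow_sum {V : Type*} [DecidableEq V] (s : Finset V) :
    ∑ t ∈ s.powerset, (-1 : ℚ) ^ t.card = if s = ∅ then 1 else 0 := by
  have := @Finset.sum_powerset_neg_one_pow_card V _ s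
  have h : ((∑ m ∈ s.powerset, (-1 : ℤ) ^ m.card : ℤ) : ℚ)
      = ∑ t ∈ s.powerset, (-1 : ℚ) ^ t.card := by push_cast; rfl
  rw [← h, this]; split <;> norm_num

/-- Sum over subsets of `z` meeting `x`. -/
lemma gsf_inner {V : Type*} [DecidableEq V] (x z : Finset V) :
    ∑ u ∈ z.powerset.filter (fun u => (x ∩ u).Nonempty), (-1 : ℚ) ^ (u.card + 1)
      = (if z ⊆ x then 1 else 0) - (if z = ∅ then 1 else 0) := by
  have hsplit := Finset.sum_filter_add_sum_filter_not z.powerset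
    (fun u => (x ∩ u).Nonempty) (fun u => (-1 : ℚ) ^ (u.card + 1))
  have hcompl : z.powerset.filter (fun u => ¬ (x ∩ u).Nonempty) = (z \ x).powerset := by
    ext u
    simp only [mem_filter, mem_powerset, Finset.not_nonempty_iff_eq_empty,
      ← Finset.disjoint_iff_inter_eq_empty, Finset.subset_sdiff]
    tauto
  have hall : ∑ u ∈ z.powerset, (-1 : ℚ) ^ (u.card + 1) = -(if z = ∅ then 1 else 0) := by
    rw [← gsf_pow_sum, ← Finset.sum_neg_distrib]
    exact Finset.sum_congr rfl fun u _ => by ring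
  have hc : ∑ u ∈ z.powerset.filter (fun u => ¬ (x ∩ u).Nonempty), (-1 : ℚ) ^ (u.card + 1)
      = -(if z ⊆ x then 1 else 0) := by
    rw [hcompl]
    have : ∑ u ∈ (z \ x).powerset, (-1 : ℚ) ^ (u.card + 1)
        = -(if z \ x = ∅ then 1 else 0) := by
      rw [← gsf_pow_sum, ← Finset.sum_neg_distrib]
      exact Finset.sum_congr rfl fun u _ => by ring
    rw [this]; simp only [Finset.sdiff_eq_empty_iff_subset]
  linarith [hsplit, hall, hc]

lemma gsf_interval {V : Type*} [DecidableEq V] (x y : Finset V) (hyx : y ⊆ x) :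
    ∑ z ∈ x.powerset.filter (fun z => y ⊆ z), (-1 : ℚ) ^ (z.card + 1)
      = (-1 : ℚ) ^ (y.card + 1) * (if x = y then 1 else 0) := by
  have key : ∑ z ∈ x.powerset.filter (fun z => y ⊆ z), (-1 : ℚ) ^ (z.card + 1)
      = ∑ w ∈ (x \ y).powerset, (-1 : ℚ) ^ ((y.card + w.card) + 1) := by
    refine Finset.sum_nbij' (fun z => z \ y) (fun w => y ∪ w) ?_ ?_ ?_ ?_ ?_
    · intro z hz
      simp only [mem_filter, mem_powerset] at hz ⊢
      exact sdiff_subset_sdiff hz.1 (Finset.Subset.refl y)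
    · intro w hw
      simp only [mem_powerset, mem_filter] at hw ⊢
      constructor
      · exact Finset.union_subset hyx (hw.trans (Finset.sdiff_subset))
      · exact Finset.subset_union_left
    · intro z hz
      simp only [mem_filter, mem_powerset] at hz
      exact Finset.union_sdiff_of_subset hz.2
    · intro w hw
      simp only [mem_powerset] at hw
      show (y ∪ w) \ y = w
      rw [Finset.union_sdiff_cancel_left]
      exact Finset.disjoint_of_subset_right hw Finset.sdiff_disjoint.symm
    · intro z hz
      simp only [mem_filter, mem_powerset] at hz
      congr 2
      have hle := Finset.card_le_card hz.2
      rw [Finset.card_sdiff_of_subset hz.2]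
      omega
  rw [key]
  have : ∑ w ∈ (x \ y).powerset, (-1 : ℚ) ^ ((y.card + w.card) + 1)
      = (-1 : ℚ) ^ (y.card + 1) * ∑ w ∈ (x \ y).powerset, (-1 : ℚ) ^ w.card := by
    rw [Finset.mul_sum]
    exact Finset.sum_congr rfl fun w _ => by ring
  rw [this, gsf_pow_sum]
  by_cases h : x = y
  · subst h; simp
  · have h2 : ¬ x ⊆ y := fun hxy => h (Finset.Subset.antisymm hxy hyx)
    simp [h, h2, Finset.sdiff_eq_empty_iff_subset]

def gsfG {V : Type*} [DecidableEq V] (G : Finset (Finset V)) :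
    Matrix {x // x ∈ G} {x // x ∈ G} ℚ := fun u v =>
  (-1 : ℚ) ^ ((u : Finset V).card + 1) * (-1) ^ ((v : Finset V).card + 1) *
    ∑ z ∈ G.filter (fun z => (u : Finset V) ⊆ z ∧ (v : Finset V) ⊆ z),
      (-1 : ℚ) ^ (z.card + 1)

lemma gsf_mul {V : Type*} [DecidableEq V]
    (G : Finset (Finset V))
    (hne : ∀ x ∈ G, x.Nonempty)
    (hclosed : ∀ x ∈ G, ∀ y ⊆ x, y.Nonempty → y ∈ G)
    (L : Matrix {x // x ∈ G} {x // x ∈ G} ℚ)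
    (hL : ∀ x y, L x y = if ((x : Finset V) ∩ (y : Finset V)).Nonempty then 1 else 0) :
    L * gsfG G = 1 := by
  ext x y
  rw [Matrix.mul_apply, Matrix.one_apply]
  set F : Finset V → ℚ := fun u =>
      ∑ z ∈ G, (if ((x : Finset V) ∩ u).Nonempty then (1:ℚ) else 0)
        * (if u ⊆ z then 1 else 0) * (-1 : ℚ) ^ (u.card + 1)
        * ((if (y : Finset V) ⊆ z then (1:ℚ) else 0)
           * (-1 : ℚ) ^ ((y : Finset V).card + 1) * (-1 : ℚ) ^ (z.card + 1)) with hF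
  have hstep : ∀ u : {x // x ∈ G}, L x u * gsfG G u y = F ↑u := by
    intro u
    simp only [hF, gsfG, hL, Finset.sum_filter, Finset.mul_sum]
    refine Finset.sum_congr rfl fun z hz => ?_
    by_cases h1 : ((x : Finset V) ∩ (u : Finset V)).Nonempty <;>
      by_cases h2 : (u : Finset V) ⊆ z <;>
      by_cases h3 : (y : Finset V) ⊆ z <;>
      simp [h1, h2, h3] <;> ring
  rw [Finset.sum_congr rfl (fun u _ => hstep u), Finset.sum_coe_sort G F]
  simp only [hF]
  rw [Finset.sum_comm]
  have hinner : ∀ z ∈ G,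
      ∑ u ∈ G, (if ((x : Finset V) ∩ u).Nonempty then (1:ℚ) else 0)
        * (if u ⊆ z then 1 else 0) * (-1 : ℚ) ^ (u.card + 1)
      = if z ⊆ (x : Finset V) then 1 else 0 := by
    intro z hz
    have hset : G.filter (fun u => u ⊆ z ∧ ((x : Finset V) ∩ u).Nonempty)
        = z.powerset.filter (fun u => ((x : Finset V) ∩ u).Nonempty) := by
      ext u
      simp only [Finset.mem_filter, Finset.mem_powerset]
      constructor
      · rintro ⟨_, h2, h3⟩; exact ⟨h2, h3⟩
      · rintro ⟨h2, h3⟩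
        obtain ⟨a, ha⟩ := h3
        exact ⟨hclosed z hz u h2 ⟨a, (Finset.mem_inter.1 ha).2⟩, h2, ⟨a, ha⟩⟩
    have hkey := gsf_inner (x : Finset V) z
    rw [← hset, Finset.sum_filter] at hkey
    rw [if_neg (hne z hz).ne_empty, sub_zero] at hkey
    rw [← hkey]
    refine Finset.sum_congr rfl fun u _ => ?_
    by_cases h1 : ((x : Finset V) ∩ u).Nonempty <;> by_cases h2 : u ⊆ z <;>
      simp [h1, h2]
  have houter : ∀ z ∈ G,
      ∑ u ∈ G, (if ((x : Finset V) ∩ u).Nonempty then (1:ℚ) else 0)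
        * (if u ⊆ z then 1 else 0) * (-1 : ℚ) ^ (u.card + 1)
        * ((if (y : Finset V) ⊆ z then (1:ℚ) else 0)
           * (-1 : ℚ) ^ ((y : Finset V).card + 1) * (-1 : ℚ) ^ (z.card + 1))
      = (if z ⊆ (x : Finset V) then 1 else 0)
        * ((if (y : Finset V) ⊆ z then (1:ℚ) else 0)
           * (-1 : ℚ) ^ ((y : Finset V).card + 1) * (-1 : ℚ) ^ (z.card + 1)) := by
    intro z hz
    rw [← Finset.sum_mul, hinner z hz]
  rw [Finset.sum_congr rfl houter]
  have hcollect : ∑ z ∈ G, (if z ⊆ (x : Finset V) then (1:ℚ) else 0)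
        * ((if (y : Finset V) ⊆ z then (1:ℚ) else 0)
           * (-1 : ℚ) ^ ((y : Finset V).card + 1) * (-1 : ℚ) ^ (z.card + 1))
      = (-1 : ℚ) ^ ((y : Finset V).card + 1)
        * ∑ z ∈ G.filter (fun z => (y : Finset V) ⊆ z ∧ z ⊆ (x : Finset V)),
            (-1 : ℚ) ^ (z.card + 1) := by
    rw [Finset.mul_sum, Finset.sum_filter]
    refine Finset.sum_congr rfl fun z _ => ?_
    by_cases h1 : z ⊆ (x : Finset V) <;> by_cases h2 : (y : Finset V) ⊆ z <;>
      simp [h1, h2] <;> ring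
  rw [hcollect]
  by_cases hxy : (y : Finset V) ⊆ (x : Finset V)
  · have hset2 : G.filter (fun z => (y : Finset V) ⊆ z ∧ z ⊆ (x : Finset V))
        = ((x : Finset V)).powerset.filter (fun z => (y : Finset V) ⊆ z) := by
      ext z
      simp only [Finset.mem_filter, Finset.mem_powerset]
      constructor
      · rintro ⟨_, h1, h2⟩; exact ⟨h2, h1⟩
      · rintro ⟨h2, h1⟩
        exact ⟨hclosed (↑x) x.2 z h2 ((hne (↑y) y.2).mono h1), h1, h2⟩
    rw [hset2, gsf_interval _ _ hxy]
    have hsq : (-1 : ℚ) ^ ((y : Finset V).card + 1) * (-1 : ℚ) ^ ((y : Finset V).card + 1)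
        = 1 := by
      rw [← pow_add]
      exact Even.neg_one_pow ⟨(y : Finset V).card + 1, by ring⟩
    rw [← mul_assoc, hsq, one_mul]
    congr 1
    simp only [eq_iff_iff]
    constructor
    · intro h; exact Subtype.ext h.symm |>.symm
    · intro h; exact congrArg _ h.symm |>.symm
  · have hempty : G.filter (fun z => (y : Finset V) ⊆ z ∧ z ⊆ (x : Finset V)) = ∅ := by
      refine Finset.filter_eq_empty_iff.2 fun z _ => ?_
      rintro ⟨h1, h2⟩
      exact hxy (h1.trans h2)
    rw [hempty, Finset.sum_empty, mul_zero]
    rw [if_neg (fun h => hxy (by rw [h]))]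


/-- Green star formula: for a finite abstract simplicial complex `G` with
connection matrix `L` (`L x y = 1` iff `x ∩ y ≠ ∅`), `L` is invertible and
`L⁻¹ x y = ω(x) ω(y) χ(St(x) ∩ St(y))` where `ω(x) = (-1)^dim(x)`,
`St(x) = {z ∈ G : x ⊆ z}` and `χ(A) = Σ_{z ∈ A} ω(z)`. -/
theorem green_star_formula {V : Type*} [DecidableEq V]
    (G : Finset (Finset V))
    (hne : ∀ x ∈ G, x.Nonempty)
    (hclosed : ∀ x ∈ G, ∀ y ⊆ x, y.Nonempty → y ∈ G)
    (L : Matrix {x // x ∈ G} {x // x ∈ G} ℚ)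
    (hL : ∀ x y, L x y = if ((x : Finset V) ∩ (y : Finset V)).Nonempty then 1 else 0) :
    IsUnit L.det ∧
    ∀ x y : {x // x ∈ G},
      L⁻¹ x y = (-1 : ℚ) ^ ((x : Finset V).card + 1) * (-1) ^ ((y : Finset V).card + 1) *
        ∑ z ∈ G.filter (fun z => (x : Finset V) ⊆ z ∧ (y : Finset V) ⊆ z),
          (-1 : ℚ) ^ (z.card + 1) := by
  have hLg := gsf_mul G hne hclosed L hL
  have hdet : IsUnit L.det := by
    have hd := congrArg Matrix.det hLg
    rw [Matrix.det_mul, Matrix.det_one] at hd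
    exact IsUnit.of_mul_eq_one _ hd
  refine ⟨hdet, fun x y => ?_⟩
  rw [Matrix.inv_eq_right_inv hLg]
  rfl
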